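/- Every 2-cycle on {1,...,n} is a symmetric-difference sum of finitely many tetrahedra: there exist 4-element subsets A_1,...,A_k of {1,...,n} such that C equals the iterated symmetric difference of the tetrahedra T_{A_1},...,T_{A_k}. -/
import Mathlib


/-- A 2-cycle on `{1,...,n}` is a set `C` of 3-element subsets of `{1,...,n}` such that
every 2-element subset is contained in an even number of members of `C`. -/
def IsTwoCycle (n : ℕ) (C : Finset (Finset (Fin n))) : Prop :=
  (∀ f ∈ C, f.card = 3) ∧
  ∀ p : Finset (Fin n), p.card = 2 → Even (C.filter (fun f => p ⊆ f)).card

/-- The tetrahedron `T_A` of a 4-element set `A`: the set of all four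
3-element subsets of `A`. -/
def tetrahedron {n : ℕ} (A : Finset (Fin n)) : Finset (Finset (Fin n)) :=
  Finset.powersetCard 3 A

lemma even_card_filter_symmDiff {α : Type*} [DecidableEq α] (q : α → Prop) [DecidablePred q]
    (s t : Finset α) (hs : Even ((s.filter q).card)) (ht : Even ((t.filter q).card)) :
    Even (((symmDiff s t).filter q).card) := by
  have h1 : (symmDiff s t).filter q = ((s \ t).filter q) ∪ ((t \ s).filter q) := by
    rw [symmDiff_def, Finset.sup_eq_union, Finset.filter_union]
  have hd : Disjoint ((s \ t).filter q) ((t \ s).filter q) := by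
    apply Finset.disjoint_left.2
    intro a ha hb
    simp only [Finset.mem_filter, Finset.mem_sdiff] at ha hb
    exact hb.1.2 ha.1.1
  have h2 : ((symmDiff s t).filter q).card = ((s \ t).filter q).card + ((t \ s).filter q).card := by
    rw [h1, Finset.card_union_of_disjoint hd]
  have hs' : s.filter q = ((s \ t).filter q) ∪ ((s ∩ t).filter q) := by
    rw [← Finset.filter_union, Finset.sdiff_union_inter]
  have ht' : t.filter q = ((t \ s).filter q) ∪ ((s ∩ t).filter q) := by
    rw [← Finset.filter_union, Finset.inter_comm, Finset.sdiff_union_inter]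
  have hds : Disjoint ((s \ t).filter q) ((s ∩ t).filter q) := by
    apply Finset.disjoint_left.2
    intro a ha hb
    simp only [Finset.mem_filter, Finset.mem_sdiff, Finset.mem_inter] at ha hb
    exact ha.1.2 hb.1.2
  have hdt : Disjoint ((t \ s).filter q) ((s ∩ t).filter q) := by
    apply Finset.disjoint_left.2
    intro a ha hb
    simp only [Finset.mem_filter, Finset.mem_sdiff, Finset.mem_inter] at ha hb
    exact ha.1.2 hb.1.1
  rw [hs', Finset.card_union_of_disjoint hds] at hs
  rw [ht', Finset.card_union_of_disjoint hdt] at ht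
  rw [Nat.even_iff] at *
  omega

lemma tetrahedron_isTwoCycle {n : ℕ} (A : Finset (Fin n)) (hA : A.card = 4) :
    IsTwoCycle n (tetrahedron A) := by
  constructor
  · intro f hf
    exact (Finset.mem_powersetCard.1 hf).2
  · intro p hp
    by_cases hpA : p ⊆ A
    · have key : (tetrahedron A).filter (fun f => p ⊆ f)
          = (A \ p).image (fun x => insert x p) := by
        ext f
        simp only [Finset.mem_filter, Finset.mem_image, tetrahedron, Finset.mem_powersetCard,
          Finset.mem_sdiff]
        constructor
        · rintro ⟨⟨hfA, hf3⟩, hpf⟩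
          have h1 : (f \ p).card = 1 := by
            rw [Finset.card_sdiff_of_subset hpf, hf3, hp]
          obtain ⟨x, hx⟩ := Finset.card_eq_one.1 h1
          have hxfp : x ∈ f \ p := by rw [hx]; exact Finset.mem_singleton_self x
          have hxfp' := Finset.mem_sdiff.1 hxfp
          refine ⟨x, ⟨hfA hxfp'.1, hxfp'.2⟩, ?_⟩
          have hfe : f = (f \ p) ∪ p := by rw [Finset.sdiff_union_of_subset hpf]
          rw [hfe, hx]
          ext y
          simp [or_comm]
        · rintro ⟨x, ⟨hxA, hxp⟩, rfl⟩
          refine ⟨⟨Finset.insert_subset hxA hpA, ?_⟩, Finset.subset_insert _ _⟩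
          rw [Finset.card_insert_of_notMem hxp, hp]
      rw [key, Finset.card_image_of_injOn, Finset.card_sdiff_of_subset hpA, hA, hp]
      · exact ⟨1, rfl⟩
      · intro x hx y hy hxy
        have hx' : x ∉ p := (Finset.mem_sdiff.1 hx).2
        have hxy' : insert x p = insert y p := hxy
        have : x ∈ insert y p := hxy' ▸ Finset.mem_insert_self x p
        rcases Finset.mem_insert.1 this with h | h
        · exact h
        · exact absurd h hx'
    · have : (tetrahedron A).filter (fun f => p ⊆ f) = ∅ := by
        apply Finset.filter_eq_empty_iff.2
        intro f hf hpf
        exact hpA (hpf.trans (Finset.mem_powersetCard.1 hf).1)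
      rw [this]
      simp

lemma symmDiff_isTwoCycle {n : ℕ} {C D : Finset (Finset (Fin n))}
    (hC : IsTwoCycle n C) (hD : IsTwoCycle n D) : IsTwoCycle n (symmDiff C D) := by
  constructor
  · intro f hf
    rcases Finset.mem_symmDiff.1 hf with ⟨h, _⟩ | ⟨h, _⟩
    · exact hC.1 f h
    · exact hD.1 f h
  · intro p hp
    exact even_card_filter_symmDiff _ _ _ (hC.2 p hp) (hD.2 p hp)

lemma all_contain_empty {n : ℕ} (v : Fin n) (C : Finset (Finset (Fin n)))
    (hC : IsTwoCycle n C) (hall : ∀ f ∈ C, v ∈ f) : C = ∅ := by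
  by_contra h
  obtain ⟨f, hf⟩ := Finset.nonempty_of_ne_empty h
  have hf3 := hC.1 f hf
  have hvf := hall f hf
  set p := f.erase v with hpdef
  have hp2 : p.card = 2 := by
    rw [hpdef, Finset.card_erase_of_mem hvf, hf3]
  have key : C.filter (fun g => p ⊆ g) = {f} := by
    ext g
    simp only [Finset.mem_filter, Finset.mem_singleton]
    constructor
    · rintro ⟨hg, hpg⟩
      have hvg := hall g hg
      have hfg : f ⊆ g := by
        intro x hx
        rcases eq_or_ne x v with rfl | hxv
        · exact hvg
        · exact hpg (Finset.mem_erase.2 ⟨hxv, hx⟩)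
      exact (Finset.eq_of_subset_of_card_le hfg (by rw [hf3, hC.1 g hg])).symm
    · rintro rfl
      exact ⟨hf, Finset.erase_subset _ _⟩
  have := hC.2 p hp2
  rw [key] at this
  simp at this

theorem isTwoCycle_eq_sum_of_tetrahedra (n : ℕ) (C : Finset (Finset (Fin n)))
    (hC : IsTwoCycle n C) :
    ∃ l : List (Finset (Fin n)),
      (∀ A ∈ l, A.card = 4) ∧
      C = (l.map tetrahedron).foldr symmDiff ∅ := by
  rcases eq_or_ne C ∅ with rfl | hne
  · exact ⟨[], by simp, by simp⟩
  obtain ⟨f0, hf0⟩ := Finset.nonempty_of_ne_empty hne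
  have hn : 0 < n := by
    by_contra h
    have h3 := hC.1 f0 hf0
    interval_cases n
    have : f0 = ∅ := Finset.eq_empty_of_forall_notMem (fun x => x.elim0)
    simp [this] at h3
  set v : Fin n := ⟨0, hn⟩ with hv
  clear hne hf0 hv
  -- strong induction on the number of triples avoiding v
  obtain ⟨k, hk⟩ : ∃ k, (C.filter (fun f => v ∉ f)).card = k := ⟨_, rfl⟩
  induction k using Nat.strong_induction_on generalizing C with
  | _ k ih =>
    rcases Finset.eq_empty_or_nonempty (C.filter (fun f => v ∉ f)) with hemp | ⟨t, ht⟩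
    · have : C = ∅ := all_contain_empty v C hC (by
        intro f hf
        by_contra hvf
        exact Finset.notMem_empty f (hemp ▸ Finset.mem_filter.2 ⟨hf, hvf⟩))
      exact ⟨[], by simp, by simp [this]⟩
    · simp only [Finset.mem_filter] at ht
      obtain ⟨htC, hvt⟩ := ht
      have ht3 := hC.1 t htC
      set A : Finset (Fin n) := insert v t with hA
      have hA4 : A.card = 4 := by
        rw [hA, Finset.card_insert_of_notMem hvt, ht3]
      have htT : t ∈ tetrahedron A := by
        rw [tetrahedron, Finset.mem_powersetCard]
        exact ⟨Finset.subset_insert _ _, ht3⟩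
      set C' := symmDiff C (tetrahedron A) with hC'
      have hC'cycle : IsTwoCycle n C' :=
        symmDiff_isTwoCycle hC (tetrahedron_isTwoCycle A hA4)
      -- every element of the tetrahedron other than t contains v
      have htetra : ∀ g ∈ tetrahedron A, v ∉ g → g = t := by
        intro g hg hvg
        rw [tetrahedron, Finset.mem_powersetCard] at hg
        have hgt : g ⊆ t := by
          intro x hx
          rcases Finset.mem_insert.1 (hg.1 hx) with rfl | h
          · exact absurd hx hvg
          · exact h
        exact Finset.eq_of_subset_of_card_le hgt (by rw [hg.2, ht3])
      have hfilter : C'.filter (fun f => v ∉ f) = (C.filter (fun f => v ∉ f)).erase t := by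
        ext g
        simp only [Finset.mem_filter, Finset.mem_erase, hC', Finset.mem_symmDiff]
        constructor
        · rintro ⟨⟨hg, hgT⟩ | ⟨hg, hgC⟩, hvg⟩
          · refine ⟨fun h => hgT (h ▸ htT), hg, hvg⟩
          · exact absurd (htetra g hg hvg ▸ htC) hgC
        · rintro ⟨hgt, hg, hvg⟩
          exact ⟨Or.inl ⟨hg, fun h => hgt (htetra g h hvg)⟩, hvg⟩
      have hlt : ((C'.filter (fun f => v ∉ f)).card) < k := by
        rw [hfilter, Finset.card_erase_of_mem (Finset.mem_filter.2 ⟨htC, hvt⟩), hk]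
        have : 0 < k := by
          rw [← hk]
          exact Finset.card_pos.2 ⟨t, Finset.mem_filter.2 ⟨htC, hvt⟩⟩
        omega
      obtain ⟨l, hl4, hleq⟩ := ih _ hlt C' hC'cycle rfl
      refine ⟨A :: l, ?_, ?_⟩
      · intro B hB
        rcases List.mem_cons.1 hB with rfl | h
        · exact hA4
        · exact hl4 B h
      · simp only [List.map_cons, List.foldr_cons, ← hleq, hC']
        rw [symmDiff_comm C (tetrahedron A), symmDiff_symmDiff_cancel_left]
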